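/- Let A be a complex normal matrix with eigenvalues λ₁ = ⋯ = λ_r and |λ₁| > |λ_{r+1}| ≥ ⋯ ≥ |λ_n|. Let q be a unit vector written as q = √(1-ε²) x* + ε ẑ where x* is a unit eigenvector for λ₁ and ẑ is a unit vector in the span of the eigenvectors for λ_{r+1},…,λ_n. Then the Rayleigh quotient ρ = q^H A q satisfies |ρ - λ₁| ≤ 2|λ₁| ε². -/

import Mathlib

open Matrix

lemma inner_mulVec_left' {n : ℕ} (M : Matrix (Fin n) (Fin n) ℂ)
    (v w : EuclideanSpace ℂ (Fin n)) :
    (@inner ℂ (EuclideanSpace ℂ (Fin n)) _ (WithLp.toLp 2 (M.mulVec v)) w : ℂ)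
      = @inner ℂ (EuclideanSpace ℂ (Fin n)) _ v (WithLp.toLp 2 (Mᴴ.mulVec w)) := by
  rw [EuclideanSpace.inner_eq_star_dotProduct, EuclideanSpace.inner_eq_star_dotProduct]
  show w.ofLp ⬝ᵥ star (M.mulVec v.ofLp) = (Mᴴ.mulVec w.ofLp) ⬝ᵥ star v.ofLp
  rw [Matrix.star_mulVec, dotProduct_comm, ← dotProduct_mulVec]
  exact dotProduct_comm _ _

lemma conjTranspose_eigenvec {n : ℕ} (A : Matrix (Fin n) (Fin n) ℂ)
    (hA : A * Aᴴ = Aᴴ * A) (μ : ℂ) (v : EuclideanSpace ℂ (Fin n))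
    (hv : A.mulVec v = μ • v) :
    Aᴴ.mulVec v = (starRingEnd ℂ) μ • v := by
  set B : Matrix (Fin n) (Fin n) ℂ := A - μ • 1 with hB
  have hBv : B.mulVec v = 0 := by
    simp [hB, Matrix.sub_mulVec, Matrix.smul_mulVec, hv]
  have hBH : Bᴴ = Aᴴ - (starRingEnd ℂ) μ • 1 := by
    simp [hB, Matrix.conjTranspose_sub, Matrix.conjTranspose_smul]
  have hnorm : B * Bᴴ = Bᴴ * B := by
    rw [hBH, hB]
    simp only [Matrix.sub_mul, Matrix.mul_sub, Matrix.mul_smul, Matrix.smul_mul,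
      Matrix.mul_one, Matrix.one_mul, hA]
    module
  have key : (@inner ℂ (EuclideanSpace ℂ (Fin n)) _ (WithLp.toLp 2 (Bᴴ.mulVec v))
      (WithLp.toLp 2 (Bᴴ.mulVec v)) : ℂ) = 0 := by
    rw [inner_mulVec_left' Bᴴ v (WithLp.toLp 2 (Bᴴ.mulVec v))]
    rw [WithLp.ofLp_toLp, Matrix.conjTranspose_conjTranspose, Matrix.mulVec_mulVec, hnorm,
      ← Matrix.mulVec_mulVec, hBv]
    simp
  have h0 := inner_self_eq_zero.mp key
  have h1 : Bᴴ.mulVec v = Aᴴ.mulVec v - (starRingEnd ℂ) μ • (WithLp.equiv 2 (Fin n → ℂ) v) := by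
    rw [hBH]
    simp [Matrix.sub_mulVec, Matrix.smul_mulVec]
  rw [h1] at h0
  have h2 := congrArg (WithLp.ofLp (p := 2)) h0
  rw [WithLp.ofLp_toLp, WithLp.ofLp_zero] at h2
  exact sub_eq_zero.mp h2

set_option maxHeartbeats 1000000 in
/-- The Rayleigh quotient of a normal matrix converges twice as fast as the
eigenvector approximation: `|ρ - λ₁| ≤ 2 |λ₁| ε²`. -/
theorem rayleigh_quotient_error_bound
    {n : ℕ} (A : Matrix (Fin n) (Fin n) ℂ) (hA : A * Aᴴ = Aᴴ * A)
    (lam : Fin n → ℂ) (x : Fin n → EuclideanSpace ℂ (Fin n))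
    (hortho : Orthonormal ℂ x)
    (heig : ∀ j, A.mulVec (x j) = lam j • x j)
    (r : ℕ) (hr1 : 1 ≤ r) (hrn : r < n)
    (hmult : ∀ j : Fin n, (j : ℕ) < r → lam j = lam ⟨0, by omega⟩)
    (hdom : ‖lam ⟨r, hrn⟩‖ < ‖lam ⟨0, by omega⟩‖)
    (horder : ∀ j : Fin n, r ≤ (j : ℕ) →
      ‖lam j‖ ≤ ‖lam ⟨r, hrn⟩‖)
    (xstar zhat : EuclideanSpace ℂ (Fin n))
    (hxstar : ‖xstar‖ = 1)
    (hxeig : A.mulVec xstar = lam ⟨0, by omega⟩ • xstar)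
    (hzhat : ‖zhat‖ = 1)
    (hzhat_span : zhat ∈ Submodule.span ℂ (x '' {j | r ≤ (j : ℕ)}))
    (hperp : (inner ℂ xstar zhat : ℂ) = 0)
    (hperpA : (inner ℂ zhat ((WithLp.toLp 2 (A.mulVec xstar) : EuclideanSpace ℂ (Fin n))) : ℂ) = 0)
    (ε : ℝ) (hε : 0 ≤ ε) (hε1 : ε ≤ 1)
    (q : EuclideanSpace ℂ (Fin n))
    (hq : q = (Real.sqrt (1 - ε ^ 2) : ℂ) • xstar + (ε : ℂ) • zhat) :
    ‖(inner ℂ q ((WithLp.toLp 2 (A.mulVec q) : EuclideanSpace ℂ (Fin n))) : ℂ)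
        - lam ⟨0, by omega⟩‖
      ≤ 2 * ‖lam ⟨0, by omega⟩‖ * ε ^ 2 := by
  classical
  have h0n : 0 < n := by omega
  set l1 : ℂ := lam ⟨0, h0n⟩ with hl1
  set T : EuclideanSpace ℂ (Fin n) →ₗ[ℂ] EuclideanSpace ℂ (Fin n) :=
    Matrix.toEuclideanLin A with hT
  have hTv : ∀ v : EuclideanSpace ℂ (Fin n), T v = WithLp.toLp 2 (A.mulVec v) := fun _ => rfl
  -- Step A : eigenvector of the adjoint
  have hAH : Aᴴ.mulVec xstar = (starRingEnd ℂ) l1 • xstar :=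
    conjTranspose_eigenvec A hA l1 xstar hxeig
  -- Step B : ⟪x*, A w⟫ = λ₁ ⟪x*, w⟫
  have hBfact : ∀ w : EuclideanSpace ℂ (Fin n),
      (inner ℂ xstar (T w) : ℂ) = l1 * inner ℂ xstar w := by
    intro w
    have h := inner_mulVec_left' Aᴴ xstar w
    rw [Matrix.conjTranspose_conjTranspose] at h
    rw [hTv, ← h, hAH, WithLp.toLp_smul, WithLp.toLp_ofLp, inner_smul_left]
    simp
  -- Step C : the span decomposition and the bound on ⟪ẑ, A ẑ⟫
  have hTx : ∀ j, T (x j) = lam j • x j := fun j => by rw [hTv, heig, WithLp.toLp_smul, WithLp.toLp_ofLp]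
  rw [Set.image_eq_range] at hzhat_span
  obtain ⟨c, hc⟩ := (Submodule.mem_span_range_iff_exists_fun ℂ).mp hzhat_span
  have hON : Orthonormal ℂ (fun i : ↥{j : Fin n | r ≤ (j : ℕ)} => x ↑i) :=
    hortho.comp _ Subtype.coe_injective
  have hTz : T zhat = ∑ i : ↥{j : Fin n | r ≤ (j : ℕ)}, (c i * lam ↑i) • x ↑i := by
    rw [← hc, map_sum]
    refine Finset.sum_congr rfl fun i _ => ?_
    rw [_root_.map_smul, hTx, smul_smul]
  set w : ℂ := (inner ℂ zhat (T zhat) : ℂ) with hw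
  have hwsum : w = ∑ i : ↥{j : Fin n | r ≤ (j : ℕ)},
      (starRingEnd ℂ) (c i) * (c i * lam ↑i) := by
    rw [hw, hTz, ← hc]
    exact hON.inner_sum c (fun i => c i * lam ↑i) Finset.univ
  have hnsum : ∑ i : ↥{j : Fin n | r ≤ (j : ℕ)}, Complex.normSq (c i) = 1 := by
    have h1 : (inner ℂ zhat zhat : ℂ) = ∑ i : ↥{j : Fin n | r ≤ (j : ℕ)},
        (starRingEnd ℂ) (c i) * c i := by
      rw [← hc]; exact hON.inner_sum c c Finset.univ
    rw [inner_self_eq_norm_sq_to_K, hzhat] at h1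
    have h2 : ((∑ i : ↥{j : Fin n | r ≤ (j : ℕ)}, Complex.normSq (c i) : ℝ) : ℂ) = 1 := by
      push_cast
      calc (∑ i : ↥{j : Fin n | r ≤ (j : ℕ)}, (Complex.normSq (c i) : ℂ))
          = ∑ i : ↥{j : Fin n | r ≤ (j : ℕ)}, (starRingEnd ℂ) (c i) * c i :=
            Finset.sum_congr rfl fun i _ => by rw [Complex.normSq_eq_conj_mul_self]
        _ = 1 := by rw [← h1]; norm_num
    exact_mod_cast h2
  have hlam_le : ∀ i : ↥{j : Fin n | r ≤ (j : ℕ)},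
      ‖lam ↑i‖ ≤ ‖l1‖ :=
    fun i => le_trans (horder ↑i i.2) hdom.le
  have habsw : ‖w‖ ≤ ‖l1‖ := by
    rw [hwsum]
    calc ‖(∑ i : ↥{j : Fin n | r ≤ (j : ℕ)},
            (starRingEnd ℂ) (c i) * (c i * lam ↑i))‖
        ≤ ∑ i : ↥{j : Fin n | r ≤ (j : ℕ)},
            ‖(starRingEnd ℂ) (c i) * (c i * lam ↑i)‖ :=
          norm_sum_le _ _
      _ ≤ ∑ i : ↥{j : Fin n | r ≤ (j : ℕ)}, Complex.normSq (c i) * ‖l1‖ := by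
          refine Finset.sum_le_sum fun i _ => ?_
          rw [norm_mul, norm_mul, Complex.norm_conj]
          have h3 : ‖c i‖ * (‖c i‖ * ‖lam ↑i‖)
              ≤ ‖c i‖ * (‖c i‖ * ‖l1‖) := by
            have := hlam_le i
            have h4 : (0:ℝ) ≤ ‖c i‖ := norm_nonneg _
            nlinarith [mul_le_mul_of_nonneg_left this (mul_nonneg h4 h4)]
          calc ‖c i‖ * (‖c i‖ * ‖lam ↑i‖)
              ≤ ‖c i‖ * (‖c i‖ * ‖l1‖) := h3
            _ = Complex.normSq (c i) * ‖l1‖ := by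
                rw [← Complex.sq_norm]; ring
      _ = ‖l1‖ := by rw [← Finset.sum_mul, hnsum, one_mul]
  -- Step D : expand the Rayleigh quotient
  have hxx : (inner ℂ xstar xstar : ℂ) = 1 := by
    rw [inner_self_eq_norm_sq_to_K, hxstar]; norm_num
  have hzx : (inner ℂ zhat xstar : ℂ) = 0 := by
    rw [← inner_conj_symm, hperp, map_zero]
  have hTxs : T xstar = l1 • xstar := by rw [hTv, hxeig, WithLp.toLp_smul, WithLp.toLp_ofLp]
  have hzTx : (inner ℂ zhat (T xstar) : ℂ) = 0 := by rw [hTv]; exact hperpA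
  have hxTz : (inner ℂ xstar (T zhat) : ℂ) = 0 := by rw [hBfact, hperp, mul_zero]
  set cc : ℂ := ((Real.sqrt (1 - ε ^ 2) : ℝ) : ℂ) with hccdef
  have hcc2 : cc * cc = 1 - (ε : ℂ) ^ 2 := by
    rw [hccdef, ← Complex.ofReal_mul,
      Real.mul_self_sqrt (by nlinarith : (0:ℝ) ≤ 1 - ε ^ 2)]
    push_cast
    ring
  have hrho : (inner ℂ q (T q) : ℂ) = cc * cc * l1 + (ε : ℂ) ^ 2 * w := by
    rw [hq, map_add, _root_.map_smul, _root_.map_smul, hTxs]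
    simp only [inner_add_left, inner_add_right, inner_smul_left, inner_smul_right,
      hxx, hxTz, hzTx, hzx, ← hw, hccdef, Complex.conj_ofReal]
    ring
  have hgoal : (inner ℂ q ((WithLp.toLp 2 (A.mulVec q) : EuclideanSpace ℂ (Fin n))) : ℂ) = inner ℂ q (T q) := by
    rw [hTv]
  rw [hgoal, hrho]
  have key : cc * cc * l1 + (ε : ℂ) ^ 2 * w - l1 = (ε : ℂ) ^ 2 * (w - l1) := by
    rw [hcc2]; ring
  rw [key, norm_mul]
  have he2 : ‖(ε : ℂ) ^ 2‖ = ε ^ 2 := by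
    rw [norm_pow, Complex.norm_real, Real.norm_of_nonneg hε]
  rw [he2]
  have hwl : ‖w - l1‖ ≤ 2 * ‖l1‖ := by
    calc ‖w - l1‖ ≤ ‖w‖ + ‖l1‖ :=
          (norm_sub_le _ _)
      _ ≤ ‖l1‖ + ‖l1‖ := by linarith
      _ = 2 * ‖l1‖ := by ring
  have hε2 : (0:ℝ) ≤ ε ^ 2 := sq_nonneg ε
  nlinarith [norm_nonneg (w - l1)]
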